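/- arXiv:0811.3705 — 4 statements merged into one kernel-verified Lean document; each statement's English description precedes it below -/
import Mathlib

section
/- For every signed finite measure Q on (X,B) that is absolutely continuous with respect to P and every measurable function f : X → ℝ such that ∫ |f| d|Q| < ∞ and x ↦ φ*(f(x)) is P-integrable, one has ∫ f dQ − ∫ φ*(f) dP ≤ D_φ(Q,P). -/
/- STATEMENT 1: With P a probability measure and φ : ℝ → [0,∞] a proper closed convex
function with φ(1) = 0 whose domain is an interval with endpoints a_φ < 1 < b_φ, let
φ*(t) := sup_{x∈ℝ} (t·x − φ(x)) be the convex conjugate.  For every signed finite measure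
Q ≪ P and every measurable f : X → ℝ with ∫|f| d|Q| < ∞ and x ↦ φ*(f(x)) P-integrable
(i.e. it coincides with an integrable real-valued function g), one has
∫ f dQ − ∫ φ*(f) dP ≤ D_φ(Q,P)  where  ∫ f dQ = ∫ f·(dQ/dP) dP. -/

open MeasureTheory Set
open scoped ENNReal NNReal

noncomputable def conjFn (φ : ℝ → ℝ≥0∞) (t : ℝ) : EReal :=
  ⨆ x : ℝ, ((t * x : ℝ) : EReal) - (φ x : EReal)

theorem dual_lower_bound
    {X : Type*} [MeasurableSpace X] (P : Measure X) [IsProbabilityMeasure P]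
    (φ : ℝ → ℝ≥0∞)
    -- φ is convex
    (hconv : ∀ x y : ℝ, ∀ t : ℝ, 0 ≤ t → t ≤ 1 →
      φ (t * x + (1 - t) * y) ≤ ENNReal.ofReal t * φ x + ENNReal.ofReal (1 - t) * φ y)
    -- φ(1) = 0
    (hone : φ 1 = 0)
    -- φ is closed (lower semicontinuous)
    (hlsc : LowerSemicontinuous φ)
    -- the domain is an interval with endpoints a_φ < 1 < b_φ
    (hdom : Set.OrdConnected {x : ℝ | φ x ≠ ∞})
    (hmem : (1 : ℝ) ∈ interior {x : ℝ | φ x ≠ ∞})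
    -- Q is a signed finite measure absolutely continuous w.r.t. P
    (Q : SignedMeasure X)
    (hQP : MeasureTheory.VectorMeasure.AbsolutelyContinuous Q P.toENNRealVectorMeasure)
    -- f is measurable with ∫ |f| d|Q| < ∞
    (f : X → ℝ) (hf_meas : Measurable f)
    (hf_int : Integrable f Q.totalVariation)
    -- x ↦ φ*(f(x)) is P-integrable, with integrable real representative g
    (g : X → ℝ) (hg_int : Integrable g P)
    (hg_repr : ∀ᵐ x ∂P, (g x : EReal) = conjFn φ (f x)) :
    ENNReal.ofReal ((∫ x, f x * Q.rnDeriv P x ∂P) - ∫ x, g x ∂P)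
      ≤ ∫⁻ x, φ (Q.rnDeriv P x) ∂P := by
  set r := Q.rnDeriv P with hr
  have hr_meas : Measurable r := Q.measurable_rnDeriv P
  have hr_int : Integrable r P := Q.integrable_rnDeriv P
  -- Q = P.withDensityᵥ r
  have hQeq : P.withDensityᵥ r = Q :=
    (SignedMeasure.absolutelyContinuous_iff_withDensityᵥ_rnDeriv_eq Q P).mp hQP
  -- total variation of Q as a withDensity measure
  have hTV : Q.totalVariation
      = P.withDensity (fun x => ENNReal.ofReal (r x) + ENNReal.ofReal (-r x)) := by
    have hadd : Q = 0 + P.withDensityᵥ r := by rw [zero_add, hQeq]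
    have h0 : (0 : SignedMeasure X) ⟂ᵥ P.toENNRealVectorMeasure :=
      VectorMeasure.MutuallySingular.zero_left
    have hJD := SignedMeasure.toJordanDecomposition_eq_of_eq_add_withDensity
      hr_meas hr_int h0 hadd
    rw [SignedMeasure.totalVariation, hJD]
    simp only [SignedMeasure.toJordanDecomposition_zero, JordanDecomposition.zero_posPart,
      JordanDecomposition.zero_negPart, zero_add]
    rw [← withDensity_add_right _ (g := fun x => ENNReal.ofReal (-r x)) (hr_meas.neg.ennreal_ofReal)]
    rfl
  have hw : ∀ x, ENNReal.ofReal (r x) + ENNReal.ofReal (-r x) = ‖r x‖₊ := by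
    intro x
    rw [← enorm_eq_nnnorm, Real.enorm_eq_ofReal_abs]
    rcases le_total 0 (r x) with h | h
    · rw [show ENNReal.ofReal (-r x) = 0 from ENNReal.ofReal_eq_zero.mpr (by linarith),
        add_zero, abs_of_nonneg h]
    · rw [show ENNReal.ofReal (r x) = 0 from ENNReal.ofReal_eq_zero.mpr h,
        zero_add, abs_of_nonpos h]
  -- integrability of f * r with respect to P
  have hfr_int : Integrable (fun x => f x * r x) P := by
    refine ⟨(hf_meas.mul hr_meas).aestronglyMeasurable, ?_⟩
    have hfin := hf_int.2
    rw [hasFiniteIntegral_def] at hfin ⊢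
    rw [hTV, lintegral_withDensity_eq_lintegral_mul _
      (f := fun x => ENNReal.ofReal (r x) + ENNReal.ofReal (-r x))
      ((hr_meas.ennreal_ofReal).add (hr_meas.neg.ennreal_ofReal))
      hf_meas.enorm] at hfin
    refine (lintegral_mono fun x => ?_).trans_lt hfin
    simp only [Pi.mul_apply, hw]
    rw [enorm_mul, ← enorm_eq_nnnorm]
    exact le_of_eq (mul_comm _ _)
  -- the pointwise inequality
  have hpt : ∀ᵐ x ∂P, ENNReal.ofReal (f x * r x - g x) ≤ φ (r x) := by
    filter_upwards [hg_repr] with x hx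
    have hle : ((f x * r x : ℝ) : EReal) - ((φ (r x) : ℝ≥0∞) : EReal) ≤ (g x : EReal) := by
      rw [hx]
      exact le_iSup (fun y => ((f x * y : ℝ) : EReal) - ((φ y : ℝ≥0∞) : EReal)) (r x)
    by_cases hφ : φ (r x) = ⊤
    · simp [hφ]
    · have hco : ((φ (r x) : ℝ≥0∞) : EReal) = ((φ (r x)).toReal : EReal) := by
        have hne : ((φ (r x) : ℝ≥0∞) : EReal) ≠ ⊤ := by
          simpa [EReal.coe_ennreal_eq_top_iff] using hφ
        have hnb : ((φ (r x) : ℝ≥0∞) : EReal) ≠ ⊥ :=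
          ne_of_gt (lt_of_lt_of_le EReal.bot_lt_zero (EReal.coe_ennreal_nonneg _))
        rw [← EReal.coe_toReal hne hnb, EReal.toReal_coe_ennreal]
      rw [hco, ← EReal.coe_sub, EReal.coe_le_coe_iff] at hle
      have : f x * r x - g x ≤ (φ (r x)).toReal := by linarith
      calc ENNReal.ofReal (f x * r x - g x) ≤ ENNReal.ofReal ((φ (r x)).toReal) :=
            ENNReal.ofReal_le_ofReal this
        _ = φ (r x) := ENNReal.ofReal_toReal hφ
  -- put it together
  have hsub : Integrable (fun x => f x * r x - g x) P := hfr_int.sub hg_int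
  have hmax : Integrable (fun x => max (f x * r x - g x) 0) P := hsub.pos_part
  have h1 : (∫ x, f x * r x ∂P) - ∫ x, g x ∂P = ∫ x, (f x * r x - g x) ∂P :=
    (integral_sub hfr_int hg_int).symm
  rw [h1]
  have h2 : ∫ x, (f x * r x - g x) ∂P ≤ ∫ x, max (f x * r x - g x) 0 ∂P :=
    integral_mono hsub hmax fun x => le_max_left _ _
  calc ENNReal.ofReal (∫ x, (f x * r x - g x) ∂P)
      ≤ ENNReal.ofReal (∫ x, max (f x * r x - g x) 0 ∂P) := ENNReal.ofReal_le_ofReal h2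
    _ = ∫⁻ x, ENNReal.ofReal (max (f x * r x - g x) 0) ∂P :=
        ofReal_integral_eq_lintegral_ofReal hmax
          (Filter.Eventually.of_forall fun x => le_max_right _ _)
    _ ≤ ∫⁻ x, φ (r x) ∂P := by
        refine lintegral_mono_ae ?_
        filter_upwards [hpt] with x hx
        have heq : ENNReal.ofReal (max (f x * r x - g x) 0) = ENNReal.ofReal (f x * r x - g x) := by
          rcases le_total (f x * r x - g x) 0 with h | h
          · rw [max_eq_right h, ENNReal.ofReal_zero, eq_comm, ENNReal.ofReal_eq_zero.mpr h]
          · rw [max_eq_left h]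
        rwa [heq]
end

section
/- Under the hypotheses of the dual representation theorem (φ differentiable, Q absolutely continuous with respect to P with ∫ |f| d|Q| < ∞ for all f ∈ F, D_φ(Q,P) finite, and φ'(dQ/dP) ∈ F), if in addition φ is essentially smooth, then f := φ'(dQ/dP) is the unique (up to P-almost everywhere equality) function in F achieving the supremum in D_φ(Q,P) = sup_{f∈F} { ∫ f dQ − ∫ φ*(f) dP }. -/
/- STATEMENT 3 (uniqueness of the dual optimal solution): under the hypotheses of the
dual representation theorem (φ differentiable on the interior of its domain, Q ≪ P with
∫|f| d|Q| < ∞ for all f ∈ F, D_φ(Q,P) finite, φ'(dQ/dP) ∈ F), if moreover φ is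
essentially smooth (|φ'(x)| → ∞ as x approaches any finite endpoint of the domain),
then f* := φ'(dQ/dP) is the unique (up to P-a.e. equality) function in F achieving the
supremum in D_φ(Q,P) = sup_{f∈F} { ∫ f dQ − ∫ φ*(f) dP }. -/

open MeasureTheory Set Filter Topology
open scoped ENNReal NNReal

lemma ereal_coe_of_ne_top {b : ℝ≥0∞} (hb : b ≠ ⊤) :
    (b : EReal) = ((b.toReal : ℝ) : EReal) := by
  conv_lhs => rw [← ENNReal.ofReal_toReal hb]
  rw [EReal.coe_ennreal_ofReal, max_eq_left ENNReal.toReal_nonneg]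

lemma phi_convexOn (φ : ℝ → ℝ≥0∞)
    (hconv : ∀ x y : ℝ, ∀ t : ℝ, 0 ≤ t → t ≤ 1 →
      φ (t * x + (1 - t) * y) ≤ ENNReal.ofReal t * φ x + ENNReal.ofReal (1 - t) * φ y)
    (hdom : Set.OrdConnected {x : ℝ | φ x ≠ ∞}) :
    ConvexOn ℝ {x : ℝ | φ x ≠ ∞} (fun x => (φ x).toReal) := by
  refine ⟨convex_iff_ordConnected.mpr hdom, ?_⟩
  intro x hx y hy a b ha hb hab
  have hx' : φ x ≠ ∞ := hx
  have hy' : φ y ≠ ∞ := hy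
  have hb' : b = 1 - a := by linarith
  subst hb'
  have h := hconv x y a ha (by linarith)
  have hne1 : ENNReal.ofReal a * φ x ≠ ∞ := ENNReal.mul_ne_top ENNReal.ofReal_ne_top hx'
  have hne2 : ENNReal.ofReal (1 - a) * φ y ≠ ∞ := ENNReal.mul_ne_top ENNReal.ofReal_ne_top hy'
  have hne : ENNReal.ofReal a * φ x + ENNReal.ofReal (1 - a) * φ y ≠ ∞ :=
    ENNReal.add_ne_top.mpr ⟨hne1, hne2⟩
  calc (φ (a • x + (1 - a) • y)).toReal
      ≤ (ENNReal.ofReal a * φ x + ENNReal.ofReal (1 - a) * φ y).toReal := by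
        refine ENNReal.toReal_mono hne ?_
        simpa [smul_eq_mul] using h
    _ = a • (φ x).toReal + (1 - a) • (φ y).toReal := by
        rw [ENNReal.toReal_add hne1 hne2, ENNReal.toReal_mul, ENNReal.toReal_mul,
          ENNReal.toReal_ofReal ha, ENNReal.toReal_ofReal (by linarith)]
        simp [smul_eq_mul]

lemma subgrad_eq (φ : ℝ → ℝ≥0∞)
    (hconv : ∀ x y : ℝ, ∀ t : ℝ, 0 ≤ t → t ≤ 1 →
      φ (t * x + (1 - t) * y) ≤ ENNReal.ofReal t * φ x + ENNReal.ofReal (1 - t) * φ y)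
    (hdom : Set.OrdConnected {x : ℝ | φ x ≠ ∞})
    (hmem : (1 : ℝ) ∈ interior {x : ℝ | φ x ≠ ∞})
    (φ' : ℝ → ℝ)
    (hdiff : ∀ x ∈ interior {x : ℝ | φ x ≠ ∞},
      HasDerivAt (fun y => (φ y).toReal) (φ' x) x)
    (hes_left : ∀ a : ℝ, IsGLB {x : ℝ | φ x ≠ ∞} a → Tendsto φ' (𝓝[>] a) atBot)
    (hes_right : ∀ b : ℝ, IsLUB {x : ℝ | φ x ≠ ∞} b → Tendsto φ' (𝓝[<] b) atTop)
    {s t : ℝ} (hs : φ s ≠ ∞)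
    (hsub : ∀ y : ℝ, φ y ≠ ∞ → (φ s).toReal + t * (y - s) ≤ (φ y).toReal) :
    t = φ' s := by
  set D := {x : ℝ | φ x ≠ ∞} with hD
  set ψ : ℝ → ℝ := fun x => (φ x).toReal with hψdef
  have hψ : ConvexOn ℝ D ψ := phi_convexOn φ hconv hdom
  have h1D : (1 : ℝ) ∈ D := interior_subset hmem
  have hsD : s ∈ D := hs
  by_cases hsint : s ∈ interior D
  · have hmin : IsLocalMin (fun y => ψ y - t * (y - s)) s := by
      filter_upwards [isOpen_interior.mem_nhds hsint] with y hy
      have := hsub y (interior_subset hy)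
      simp only [hψdef]
      simp only [sub_self, mul_zero, sub_zero]
      linarith
    have hder : HasDerivAt (fun y => ψ y - t * (y - s)) (φ' s - t) s := by
      have h1 : HasDerivAt (fun y : ℝ => t * (y - s)) t s := by
        simpa using ((hasDerivAt_id s).sub_const s).const_mul t
      exact (hdiff s hsint).sub h1
    have h0 := hmin.hasDerivAt_eq_zero hder
    linarith
  · exfalso
    have hs1 : s ≠ 1 := fun h => hsint (h ▸ hmem)
    rcases lt_or_gt_of_ne hs1 with hlt | hgt
    · -- s < 1, left endpoint
      have hlb : ∀ y ∈ D, s ≤ y := by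
        intro y hy
        by_contra hys
        push_neg at hys
        exact hsint (mem_interior.mpr ⟨Ioo y 1,
          Ioo_subset_Icc_self.trans (hdom.out hy h1D), isOpen_Ioo, hys, hlt⟩)
      have hglb : IsGLB D s := ⟨hlb, fun b hb => hb hsD⟩
      have htend := hes_left s hglb
      have hIooD : Ioo s 1 ⊆ interior D := fun x hx =>
        mem_interior.mpr ⟨Ioo s 1, Ioo_subset_Icc_self.trans (hdom.out hsD h1D), isOpen_Ioo, hx⟩
      have hkey : ∀ x ∈ Ioo s 1, t ≤ φ' x := by
        intro x hx
        have hxint := hIooD hx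
        have hxs : s < x := hx.1
        have h1 : t ≤ (ψ x - ψ s) / (x - s) := by
          have := hsub x (interior_subset hxint)
          rw [le_div_iff₀ (by linarith)]
          simp only [hψdef] at *
          linarith
        refine h1.trans ?_
        have htends : Tendsto (slope ψ x) (𝓝[>] x) (𝓝 (φ' x)) :=
          (hasDerivAt_iff_tendsto_slope.mp (hdiff x hxint)).mono_left
            (nhdsWithin_mono x fun y hy => ne_of_gt hy)
        refine ge_of_tendsto htends ?_
        filter_upwards [Ioo_mem_nhdsGT_of_mem ⟨le_refl x, hx.2⟩] with y hy
        have hyD : y ∈ D := (hdom.out hsD h1D) ⟨(hxs.trans hy.1).le, hy.2.le⟩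
        rw [slope_def_field]
        exact hψ.slope_mono_adjacent hsD hyD hxs hy.1
      have hev : ∀ᶠ x in 𝓝[>] s, φ' x < t := htend.eventually (eventually_lt_atBot t)
      have hev2 : ∀ᶠ x in 𝓝[>] s, x ∈ Ioo s 1 :=
        eventually_of_mem (Ioo_mem_nhdsGT_of_mem ⟨le_refl s, hlt⟩) fun x hx => hx
      obtain ⟨x, hx1, hx2⟩ := (hev.and hev2).exists
      exact absurd (hkey x hx2) (not_le.mpr hx1)
    · -- 1 < s, right endpoint
      have hub : ∀ y ∈ D, y ≤ s := by
        intro y hy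
        by_contra hys
        push_neg at hys
        exact hsint (mem_interior.mpr ⟨Ioo 1 y,
          Ioo_subset_Icc_self.trans (hdom.out h1D hy), isOpen_Ioo, hgt, hys⟩)
      have hlub : IsLUB D s := ⟨hub, fun b hb => hb hsD⟩
      have htend := hes_right s hlub
      have hIooD : Ioo 1 s ⊆ interior D := fun x hx =>
        mem_interior.mpr ⟨Ioo 1 s, Ioo_subset_Icc_self.trans (hdom.out h1D hsD), isOpen_Ioo, hx⟩
      have hkey : ∀ x ∈ Ioo 1 s, φ' x ≤ t := by
        intro x hx
        have hxint := hIooD hx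
        have hxs : x < s := hx.2
        have h1 : (ψ s - ψ x) / (s - x) ≤ t := by
          have := hsub x (interior_subset hxint)
          rw [div_le_iff₀ (by linarith)]
          simp only [hψdef] at *
          linarith
        refine le_trans ?_ h1
        have htends : Tendsto (slope ψ x) (𝓝[<] x) (𝓝 (φ' x)) :=
          (hasDerivAt_iff_tendsto_slope.mp (hdiff x hxint)).mono_left
            (nhdsWithin_mono x fun y hy => ne_of_lt hy)
        refine le_of_tendsto htends ?_
        filter_upwards [Ioo_mem_nhdsLT_of_mem ⟨hx.1, le_refl x⟩] with y hy
        have hyD : y ∈ D := (hdom.out h1D hsD) ⟨hy.1.le, (hy.2.trans hxs).le⟩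
        rw [slope_comm, slope_def_field]
        exact hψ.slope_mono_adjacent hyD hsD hy.2 hxs
      have hev : ∀ᶠ x in 𝓝[<] s, t < φ' x := htend.eventually (eventually_gt_atTop t)
      have hev2 : ∀ᶠ x in 𝓝[<] s, x ∈ Ioo 1 s :=
        eventually_of_mem (Ioo_mem_nhdsLT_of_mem ⟨hgt, le_refl s⟩) fun x hx => hx
      obtain ⟨x, hx1, hx2⟩ := (hev.and hev2).exists
      exact absurd (hkey x hx2) (not_le.mpr hx1)

theorem dual_optimal_solution_unique
    {X : Type*} [MeasurableSpace X] (P : Measure X) [IsProbabilityMeasure P]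
    (φ : ℝ → ℝ≥0∞)
    -- φ is convex
    (hconv : ∀ x y : ℝ, ∀ t : ℝ, 0 ≤ t → t ≤ 1 →
      φ (t * x + (1 - t) * y) ≤ ENNReal.ofReal t * φ x + ENNReal.ofReal (1 - t) * φ y)
    -- φ(1) = 0
    (hone : φ 1 = 0)
    -- φ is closed (lower semicontinuous)
    (hlsc : LowerSemicontinuous φ)
    -- the domain is an interval with endpoints a_φ < 1 < b_φ
    (hdom : Set.OrdConnected {x : ℝ | φ x ≠ ∞})
    (hmem : (1 : ℝ) ∈ interior {x : ℝ | φ x ≠ ∞})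
    -- φ is differentiable on the interior of its domain, with derivative φ'
    (φ' : ℝ → ℝ)
    (hdiff : ∀ x ∈ interior {x : ℝ | φ x ≠ ∞},
      HasDerivAt (fun y => (φ y).toReal) (φ' x) x)
    -- φ is essentially smooth: φ' blows up at any finite endpoint of the domain
    (hes_left : ∀ a : ℝ, IsGLB {x : ℝ | φ x ≠ ∞} a → Tendsto φ' (𝓝[>] a) atBot)
    (hes_right : ∀ b : ℝ, IsLUB {x : ℝ | φ x ≠ ∞} b → Tendsto φ' (𝓝[<] b) atTop)
    -- Q is a signed finite measure absolutely continuous w.r.t. P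
    (Q : SignedMeasure X)
    (hQP : MeasureTheory.VectorMeasure.AbsolutelyContinuous Q P.toENNRealVectorMeasure)
    -- the class F of measurable functions, with ∫ |f| d|Q| < ∞ for all f ∈ F
    (F : Set (X → ℝ))
    (hF : ∀ f ∈ F, Measurable f ∧ Integrable f Q.totalVariation)
    -- D_φ(Q,P) is finite
    (hfin : ∫⁻ x, φ (Q.rnDeriv P x) ∂P ≠ ∞)
    -- φ'(dQ/dP) belongs to F
    (hmemF : (fun x => φ' (Q.rnDeriv P x)) ∈ F) :
    -- any f ∈ F achieving the supremum value D_φ(Q,P) equals φ'(dQ/dP) P-a.e.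
    ∀ f ∈ F, ∀ g : X → ℝ, Integrable g P →
      (∀ᵐ x ∂P, (g x : EReal) = conjFn φ (f x)) →
      (∫ x, f x * Q.rnDeriv P x ∂P) - (∫ x, g x ∂P)
        = (∫⁻ x, φ (Q.rnDeriv P x) ∂P).toReal →
      f =ᵐ[P] (fun x => φ' (Q.rnDeriv P x)) := by
  intro f hfF g hg hgconj hopt
  set r : X → ℝ := Q.rnDeriv P with hr
  have hrm : Measurable r := SignedMeasure.measurable_rnDeriv Q P
  have hri : Integrable r P := SignedMeasure.integrable_rnDeriv Q P
  have hfm : Measurable f := (hF f hfF).1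
  have hφm : Measurable φ := hlsc.measurable
  -- Fenchel-Young inequality (one term of the supremum)
  have hconj_ge : ∀ t y : ℝ, ((t * y : ℝ) : EReal) - (φ y : EReal) ≤ conjFn φ t := by
    intro t y
    exact le_iSup (fun z : ℝ => ((t * z : ℝ) : EReal) - (φ z : EReal)) y
  -- total variation of Q
  have hQeq : Q = 0 + P.withDensityᵥ r := by
    rw [zero_add, SignedMeasure.withDensityᵥ_rnDeriv_eq Q P hQP]
  have hjd := SignedMeasure.toJordanDecomposition_eq_of_eq_add_withDensity hrm hri
    (VectorMeasure.MutuallySingular.zero_left) hQeq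
  have htv : Q.totalVariation
      = P.withDensity (fun x => ENNReal.ofReal (r x))
        + P.withDensity (fun x => ENNReal.ofReal (-r x)) := by
    rw [SignedMeasure.totalVariation, hjd]
    simp [SignedMeasure.toJordanDecomposition_zero]
  -- integrability of f * r
  have hfrint : Integrable (fun x => f x * r x) P := by
    have h2 := (hF f hfF).2
    rw [htv, integrable_add_measure] at h2
    have h2a := (integrable_withDensity_iff (hrm.ennreal_ofReal)
      (ae_of_all _ fun x => ENNReal.ofReal_lt_top)).mp h2.1
    have h2b := (integrable_withDensity_iff (hrm.neg.ennreal_ofReal)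
      (ae_of_all _ fun x => ENNReal.ofReal_lt_top)).mp h2.2
    refine (h2a.sub h2b).congr (ae_of_all _ fun x => ?_)
    simp only [Pi.sub_apply]
    rw [ENNReal.toReal_ofReal', ENNReal.toReal_ofReal', ← mul_sub, Pi.neg_apply,
      max_zero_sub_max_neg_zero_eq_self]
  -- integrability of (φ ∘ r).toReal
  have haefin : ∀ᵐ x ∂P, φ (r x) < ∞ := ae_lt_top (hφm.comp hrm) hfin
  have hψint : Integrable (fun x => (φ (r x)).toReal) P :=
    integrable_toReal_of_lintegral_ne_top (hφm.comp hrm).aemeasurable hfin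
  have hψeq : ∫ x, (φ (r x)).toReal ∂P = (∫⁻ x, φ (r x) ∂P).toReal :=
    integral_toReal (hφm.comp hrm).aemeasurable haefin
  -- the slack function is nonnegative a.e. with zero integral
  have hunn : 0 ≤ᵐ[P] fun x => g x - f x * r x + (φ (r x)).toReal := by
    filter_upwards [hgconj, haefin] with x hgx hfx
    have hle := hconj_ge (f x) (r x)
    rw [ereal_coe_of_ne_top hfx.ne, ← EReal.coe_sub, ← hgx, EReal.coe_le_coe_iff] at hle
    simp only [Pi.zero_apply]
    linarith
  have huint : Integrable (fun x => g x - f x * r x + (φ (r x)).toReal) P :=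
    (hg.sub hfrint).add hψint
  have hsubint : Integrable (fun x => g x - f x * r x) P := hg.sub hfrint
  have huzero : ∫ x, (g x - f x * r x + (φ (r x)).toReal) ∂P = 0 := by
    rw [integral_add hsubint hψint, integral_sub hg hfrint, hψeq]
    linarith
  have hu0 : (fun x => g x - f x * r x + (φ (r x)).toReal) =ᵐ[P] 0 :=
    (integral_eq_zero_iff_of_nonneg_ae hunn huint).mp huzero
  filter_upwards [hgconj, haefin, hu0] with x hgx hfx hux
  have hgval : g x = f x * r x - (φ (r x)).toReal := by
    have h0 : g x - f x * r x + (φ (r x)).toReal = 0 := hux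
    linarith
  have hsub : ∀ y : ℝ, φ y ≠ ∞ → (φ (r x)).toReal + f x * (y - r x) ≤ (φ y).toReal := by
    intro y hy
    have hle := hconj_ge (f x) y
    rw [← hgx, ereal_coe_of_ne_top hy, ← EReal.coe_sub, EReal.coe_le_coe_iff, hgval] at hle
    nlinarith [hle]
  exact subgrad_eq φ hconv hdom hmem φ' hdiff hes_left hes_right hfx.ne hsub
end

section
/- For every θ ∈ Θ one has D_φ(θ, θ_T) = sup_{α∈Θ} P_{θ_T} h(θ,α); moreover the supremum is attained at α = θ_T, and this maximizer is unique, independently of the value of θ. -/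
/- STATEMENT 4: In an identifiable parametric model {P_θ : θ ∈ Θ}, Θ ⊆ ℝ^d, with common
support and densities p_θ w.r.t. a σ-finite measure λ, with φ strictly convex, essentially
smooth, φ(1)=0, differentiable, and the integrability condition ∫|φ'(p_θ/p_α)| dP_θ < ∞
for all θ,α ∈ Θ, one has for every θ ∈ Θ:
    D_φ(θ,θ_T) = sup_{α ∈ Θ} P_{θ_T} h(θ,α),
the supremum is attained at α = θ_T, and this maximizer is unique, independently of θ.
Here h(θ,α,x) := ∫ φ'(p_θ/p_α) dP_θ − [ (p_θ/p_α)(x) φ'((p_θ/p_α)(x)) − φ((p_θ/p_α)(x)) ]. -/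

open MeasureTheory ProbabilityTheory Filter Topology Set
open scoped ENNReal NNReal

noncomputable section

section DualRepAuxAll

namespace DualRepAux
variable {X : Type*} [MeasurableSpace X]

lemma le_of_forall_one_lt_mul {x y : ℝ≥0∞}
    (h : ∀ η : ℝ≥0, 1 < η → x ≤ (η : ℝ≥0∞) * y) : x ≤ y := by
  rcases eq_top_or_lt_top y with hy | hy
  · simp [hy]
  rcases eq_or_ne y 0 with hy0 | hy0
  · simpa [hy0] using h 2 one_lt_two
  refine ENNReal.le_of_forall_pos_le_add fun ε hε _ => ?_
  set c : ℝ≥0 := y.toNNReal with hc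
  have hc0 : c ≠ 0 := by
    simp only [hc, ne_eq, ENNReal.toNNReal_eq_zero_iff]
    push_neg
    exact ⟨hy0, hy.ne⟩
  have hη : (1 : ℝ≥0) < 1 + ε / c :=
    lt_add_of_pos_right _ (div_pos hε (pos_iff_ne_zero.mpr hc0))
  have hyc : y = (c : ℝ≥0∞) := (ENNReal.coe_toNNReal hy.ne).symm
  calc x ≤ ((1 + ε / c : ℝ≥0) : ℝ≥0∞) * y := h _ hη
  _ = y + ((ε / c : ℝ≥0) : ℝ≥0∞) * y := by
      push_cast
      rw [add_mul, one_mul]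
  _ = y + ε := by
      congr 1
      rw [hyc, ← ENNReal.coe_mul, div_mul_cancel₀ _ hc0]

lemma lintegral_restrict_indicator (μ : Measure X) {S : Set X} (hS : MeasurableSet S)
    (u : X → ℝ≥0∞) :
    ∫⁻ x, u x ∂(μ.restrict S) = ∫⁻ x, S.indicator u x ∂(μ.restrict S) := by
  rw [lintegral_indicator hS, Measure.restrict_restrict hS, inter_self]

/-- Key lemma: for a **measurable, finite** integrand `h`, the lintegral against
`ν.withDensity f` equals the lintegral of `h * f`, for an arbitrary density `f`. -/
lemma lintegral_withDensity_nonmeasurable (ν : Measure X) (f : X → ℝ≥0∞)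
    {h : X → ℝ≥0∞} (hmeas : Measurable h) (hfin : ∀ x, h x ≠ ∞) :
    ∫⁻ x, h x ∂(ν.withDensity f) = ∫⁻ x, h x * f x ∂ν := by
  have key : ∀ η : ℝ≥0, 1 < η →
      (∫⁻ x, h x ∂(ν.withDensity f) ≤ (η : ℝ≥0∞) * ∫⁻ x, h x * f x ∂ν ∧
       ∫⁻ x, h x * f x ∂ν ≤ (η : ℝ≥0∞) * ∫⁻ x, h x ∂(ν.withDensity f)) := by
    intro η hη
    set Q := ν.withDensity f with hQdef
    have hη1 : (1 : ℝ≥0∞) < (η : ℝ≥0∞) := by exact_mod_cast hη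
    have hη0 : (η : ℝ≥0∞) ≠ 0 := (zero_lt_one.trans hη1).ne'
    have hηtop : (η : ℝ≥0∞) ≠ ∞ := ENNReal.coe_ne_top
    set B : ℤ → Set X := fun l => h ⁻¹' (Ico ((η : ℝ≥0∞) ^ l) ((η : ℝ≥0∞) ^ (l + 1))) with hBdef
    have hBmeas : ∀ l, MeasurableSet (B l) := fun l => hmeas measurableSet_Ico
    have hzpow_mono : ∀ {l m : ℤ}, l ≤ m → ((η : ℝ≥0∞)) ^ l ≤ (η : ℝ≥0∞) ^ m := by
      intro l m hlm
      exact ENNReal.zpow_le_of_le hη1.le hlm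
    have hBdisj : Pairwise (Function.onFun Disjoint B) := by
      intro l m hlm
      rcases lt_or_gt_of_ne hlm with hl | hl
      · refine Set.disjoint_left.mpr fun x hxl hxm => ?_
        exact absurd (lt_of_lt_of_le hxl.2 ((hzpow_mono hl).trans hxm.1)) (lt_irrefl _)
      · refine Set.disjoint_left.mpr fun x hxl hxm => ?_
        exact absurd (lt_of_lt_of_le hxm.2 ((hzpow_mono hl).trans hxl.1)) (lt_irrefl _)
    set U : Set X := ⋃ l, B l with hUdef
    have hUmeas : MeasurableSet U := MeasurableSet.iUnion hBmeas
    have hUc : ∀ x, x ∈ Uᶜ → h x = 0 := by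
      intro x hx
      by_contra h0
      obtain ⟨l, hl⟩ := ENNReal.exists_mem_Ico_zpow h0 (hfin x) hη1 hηtop
      exact hx (Set.mem_iUnion.mpr ⟨l, hl⟩)
    have hsplit : ∀ κ : Measure X,
        κ = κ.restrict Uᶜ + Measure.sum (fun l => κ.restrict (B l)) := by
      intro κ
      rw [← Measure.restrict_iUnion hBdisj hBmeas, ← hUdef, add_comm,
        Measure.restrict_add_restrict_compl hUmeas]
    -- vanishing on Uᶜ
    have hQc : ∫⁻ x, h x ∂(Q.restrict Uᶜ) = 0 := by
      rw [lintegral_restrict_indicator Q hUmeas.compl h]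
      have : ∀ x, Uᶜ.indicator h x = 0 := by
        intro x
        by_cases hx : x ∈ Uᶜ
        · simp [hx, hUc x hx]
        · simp [hx]
      simp [this]
    have hνc : ∫⁻ x, h x * f x ∂(ν.restrict Uᶜ) = 0 := by
      rw [lintegral_restrict_indicator ν hUmeas.compl _]
      have : ∀ x, Uᶜ.indicator (fun x => h x * f x) x = 0 := by
        intro x
        by_cases hx : x ∈ Uᶜ
        · simp [hx, hUc x hx]
        · simp [hx]
      simp [this]
    -- decompositions
    have hQeq : ∫⁻ x, h x ∂Q = ∑' l : ℤ, ∫⁻ x, h x ∂(Q.restrict (B l)) := by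
      conv_lhs => rw [hsplit Q]
      rw [lintegral_add_measure, lintegral_sum_measure, hQc, zero_add]
    have hνeq : ∫⁻ x, h x * f x ∂ν = ∑' l : ℤ, ∫⁻ x, h x * f x ∂(ν.restrict (B l)) := by
      conv_lhs => rw [hsplit ν]
      rw [lintegral_add_measure, lintegral_sum_measure, hνc, zero_add]
    -- piecewise bounds
    have piece : ∀ l : ℤ,
        (∫⁻ x, h x ∂(Q.restrict (B l)) ≤ (η : ℝ≥0∞) * ∫⁻ x, h x * f x ∂(ν.restrict (B l)) ∧
         ∫⁻ x, h x * f x ∂(ν.restrict (B l)) ≤ (η : ℝ≥0∞) * ∫⁻ x, h x ∂(Q.restrict (B l))) := by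
      intro l
      set a : ℝ≥0∞ := (η : ℝ≥0∞) ^ l with hadef
      set b : ℝ≥0∞ := (η : ℝ≥0∞) ^ (l + 1) with hbdef
      have ha0 : a ≠ 0 := (ENNReal.zpow_pos hη0 hηtop l).ne'
      have hatop : a ≠ ∞ := (ENNReal.zpow_lt_top hη0 hηtop l).ne
      have hbtop : b ≠ ∞ := (ENNReal.zpow_lt_top hη0 hηtop (l + 1)).ne
      have hba : b = (η : ℝ≥0∞) * a := by
        rw [hbdef, hadef, ENNReal.zpow_add hη0 hηtop l 1, zpow_one, mul_comm]
      have hQB : Q (B l) = ∫⁻ x, f x ∂(ν.restrict (B l)) := withDensity_apply f (hBmeas l)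
      -- e1 : ∫⁻ h dQ|B ≤ b * Q(B)
      have e1 : ∫⁻ x, h x ∂(Q.restrict (B l)) ≤ b * Q (B l) := by
        rw [lintegral_restrict_indicator Q (hBmeas l) h]
        calc ∫⁻ x, (B l).indicator h x ∂(Q.restrict (B l))
            ≤ ∫⁻ x, (B l).indicator (fun _ => b) x ∂(Q.restrict (B l)) := by
              refine lintegral_mono fun x => ?_
              by_cases hx : x ∈ B l
              · simpa [hx] using le_of_lt hx.2
              · simp [hx]
        _ = b * (Q.restrict (B l)) (B l) := lintegral_indicator_const (hBmeas l) b
        _ = b * Q (B l) := by rw [Measure.restrict_apply_self]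
      -- e2 : a * Q(B) ≤ ∫⁻ h dQ|B
      have e2 : a * Q (B l) ≤ ∫⁻ x, h x ∂(Q.restrict (B l)) := by
        rw [lintegral_restrict_indicator Q (hBmeas l) h]
        calc a * Q (B l) = a * (Q.restrict (B l)) (B l) := by rw [Measure.restrict_apply_self]
        _ = ∫⁻ x, (B l).indicator (fun _ => a) x ∂(Q.restrict (B l)) :=
            (lintegral_indicator_const (hBmeas l) a).symm
        _ ≤ ∫⁻ x, (B l).indicator h x ∂(Q.restrict (B l)) := by
              refine lintegral_mono fun x => ?_
              by_cases hx : x ∈ B l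
              · simpa [hx] using hx.1
              · simp [hx]
      -- e3 : ∫⁻ hf dν|B ≤ b * Q(B)
      have e3 : ∫⁻ x, h x * f x ∂(ν.restrict (B l)) ≤ b * Q (B l) := by
        rw [lintegral_restrict_indicator ν (hBmeas l) _, hQB,
          lintegral_restrict_indicator ν (hBmeas l) f]
        rw [← lintegral_const_mul' b _ hbtop]
        refine lintegral_mono fun x => ?_
        by_cases hx : x ∈ B l
        · simp only [Set.indicator_of_mem hx]
          exact mul_le_mul_left (le_of_lt hx.2) _
        · simp [hx]
      -- e4 : a * Q(B) ≤ ∫⁻ hf dν|B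
      have e4 : a * Q (B l) ≤ ∫⁻ x, h x * f x ∂(ν.restrict (B l)) := by
        rw [lintegral_restrict_indicator ν (hBmeas l) _, hQB,
          lintegral_restrict_indicator ν (hBmeas l) f]
        rw [← lintegral_const_mul' a _ hatop]
        refine lintegral_mono fun x => ?_
        by_cases hx : x ∈ B l
        · simp only [Set.indicator_of_mem hx]
          exact mul_le_mul_left hx.1 _
        · simp [hx]
      constructor
      · calc ∫⁻ x, h x ∂(Q.restrict (B l)) ≤ b * Q (B l) := e1
        _ = (η : ℝ≥0∞) * (a * Q (B l)) := by rw [hba, mul_assoc]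
        _ ≤ (η : ℝ≥0∞) * ∫⁻ x, h x * f x ∂(ν.restrict (B l)) := mul_le_mul_right e4 _
      · calc ∫⁻ x, h x * f x ∂(ν.restrict (B l)) ≤ b * Q (B l) := e3
        _ = (η : ℝ≥0∞) * (a * Q (B l)) := by rw [hba, mul_assoc]
        _ ≤ (η : ℝ≥0∞) * ∫⁻ x, h x ∂(Q.restrict (B l)) := mul_le_mul_right e2 _
    constructor
    · rw [hQeq, hνeq, ← ENNReal.tsum_mul_left]
      exact ENNReal.tsum_le_tsum fun l => (piece l).1
    · rw [hQeq, hνeq, ← ENNReal.tsum_mul_left]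
      exact ENNReal.tsum_le_tsum fun l => (piece l).2
  exact le_antisymm (le_of_forall_one_lt_mul fun η hη => (key η hη).1)
    (le_of_forall_one_lt_mul fun η hη => (key η hη).2)

end DualRepAux

namespace DualRepAux2
variable {X : Type*} [MeasurableSpace X]

lemma lintegral_restrict_indicator (μ : Measure X) {S : Set X} (hS : MeasurableSet S)
    (u : X → ℝ≥0∞) :
    ∫⁻ x, u x ∂(μ.restrict S) = ∫⁻ x, S.indicator u x ∂(μ.restrict S) := by
  rw [lintegral_indicator hS, Measure.restrict_restrict hS, inter_self]

/-- The set where a (possibly non-measurable) density of a finite measure vanishes is null. -/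
lemma withDensity_zero_set_null (μ : Measure X) (f : X → ℝ≥0∞)
    (hfin : ∫⁻ x, f x ∂μ ≠ ∞) : μ.withDensity f {x | f x = 0} = 0 := by
  obtain ⟨g, hg, hgf, heq⟩ := exists_measurable_le_lintegral_eq μ f
  have hZ : MeasurableSet (g ⁻¹' {0}) := hg (measurableSet_singleton 0)
  have hsub : {x | f x = 0} ⊆ g ⁻¹' {0} := fun x hx =>
    le_antisymm (le_trans (hgf x) (le_of_eq hx)) zero_le
  refine measure_mono_null hsub ?_
  have hgZ : ∫⁻ x, g x ∂(μ.restrict (g ⁻¹' {0})) = 0 := by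
    rw [lintegral_restrict_indicator μ hZ g]
    have hind : ∀ x, (g ⁻¹' {0}).indicator g x = 0 := by
      intro x
      by_cases hx : x ∈ g ⁻¹' {0}
      · have hx0 : g x = 0 := hx
        simp [Set.indicator_of_mem hx, hx0]
      · simp [hx]
    simp [hind]
  have hdf : ∫⁻ x, f x ∂(μ.restrict (g ⁻¹' {0})) + ∫⁻ x, f x ∂(μ.restrict (g ⁻¹' {0})ᶜ)
      = ∫⁻ x, f x ∂μ := by
    rw [← lintegral_add_measure, Measure.restrict_add_restrict_compl hZ]
  have hdg : ∫⁻ x, g x ∂(μ.restrict (g ⁻¹' {0})) + ∫⁻ x, g x ∂(μ.restrict (g ⁻¹' {0})ᶜ)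
      = ∫⁻ x, g x ∂μ := by
    rw [← lintegral_add_measure, Measure.restrict_add_restrict_compl hZ]
  rw [hgZ, zero_add] at hdg
  have hle : ∫⁻ x, f x ∂μ ≤ ∫⁻ x, f x ∂(μ.restrict (g ⁻¹' {0})ᶜ) := by
    rw [heq, ← hdg]
    exact lintegral_mono hgf
  have hkey : ∫⁻ x, f x ∂(μ.restrict (g ⁻¹' {0})) + ∫⁻ x, f x ∂μ ≤ 0 + ∫⁻ x, f x ∂μ := by
    rw [zero_add]
    calc ∫⁻ x, f x ∂(μ.restrict (g ⁻¹' {0})) + ∫⁻ x, f x ∂μ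
        ≤ ∫⁻ x, f x ∂(μ.restrict (g ⁻¹' {0})) + ∫⁻ x, f x ∂(μ.restrict (g ⁻¹' {0})ᶜ) :=
          add_le_add le_rfl hle
    _ = ∫⁻ x, f x ∂μ := hdf
  have : ∫⁻ x, f x ∂(μ.restrict (g ⁻¹' {0})) = 0 :=
    le_zero_iff.mp ((WithTop.add_le_add_iff_right hfin).mp hkey)
  rw [withDensity_apply f hZ]
  exact this

/-- If two probability densities agree off a set that is null for the second density's
measure, then the two `withDensity` measures agree. -/
lemma withDensity_eq_of_eq_off_null (μ : Measure X) (pa pb : X → ℝ)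
    {N : Set X} (hN : MeasurableSet N)
    (hnull : μ.withDensity (fun x => ENNReal.ofReal (pb x)) N = 0)
    (heqoff : ∀ x ∉ N, pa x = pb x)
    (hma : μ.withDensity (fun x => ENNReal.ofReal (pa x)) univ = 1)
    (hmb : μ.withDensity (fun x => ENNReal.ofReal (pb x)) univ = 1) :
    μ.withDensity (fun x => ENNReal.ofReal (pa x))
      = μ.withDensity (fun x => ENNReal.ofReal (pb x)) := by
  set fa : X → ℝ≥0∞ := fun x => ENNReal.ofReal (pa x) with hfa
  set fb : X → ℝ≥0∞ := fun x => ENNReal.ofReal (pb x) with hfb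
  set wa := μ.withDensity fa with hwa
  set wb := μ.withDensity fb with hwb
  -- integrals of fa and fb agree on subsets of Nᶜ
  have hEq : ∀ B : Set X, MeasurableSet B →
      ∫⁻ x, fa x ∂(μ.restrict (B \ N)) = ∫⁻ x, fb x ∂(μ.restrict (B \ N)) := by
    intro B hB
    rw [lintegral_restrict_indicator μ (hB.diff hN) fa,
      lintegral_restrict_indicator μ (hB.diff hN) fb]
    refine lintegral_congr fun x => ?_
    by_cases hx : x ∈ B \ N
    · simp only [Set.indicator_of_mem hx, hfa, hfb, heqoff x hx.2]
    · simp [hx]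
  have hwa_split : ∀ B : Set X, MeasurableSet B → wa (B ∩ N) + wa (B \ N) = wa B :=
    fun B _ => measure_inter_add_diff B hN
  -- wa N = 0
  have hwbNc : wb N + wb Nᶜ = 1 := by
    rw [← hmb]
    simpa [Set.inter_comm, Set.diff_eq, Set.univ_inter] using
      (measure_inter_add_diff (univ : Set X) hN)
  have hwbNc1 : wb Nᶜ = 1 := by rw [hnull, zero_add] at hwbNc; exact hwbNc
  have hwaNc : wa Nᶜ = wb Nᶜ := by
    have h1 : wa Nᶜ = ∫⁻ x, fa x ∂(μ.restrict (univ \ N)) := by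
      rw [hwa, withDensity_apply fa hN.compl]
      congr 1
      rw [Set.diff_eq, Set.univ_inter]
    have h2 : wb Nᶜ = ∫⁻ x, fb x ∂(μ.restrict (univ \ N)) := by
      rw [hwb, withDensity_apply fb hN.compl]
      congr 1
      rw [Set.diff_eq, Set.univ_inter]
    rw [h1, h2, hEq univ MeasurableSet.univ]
  have hwaN : wa N = 0 := by
    have hsplit : wa N + wa Nᶜ = 1 := by
      rw [← hma]
      simpa [Set.inter_comm, Set.diff_eq, Set.univ_inter] using
        (measure_inter_add_diff (univ : Set X) hN)
    rw [hwaNc, hwbNc1] at hsplit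
    have : wa N + 1 ≤ 0 + 1 := by rw [hsplit, zero_add]
    exact le_zero_iff.mp ((WithTop.add_le_add_iff_right ENNReal.one_ne_top).mp this)
  -- conclude
  ext B hB
  have ha : wa B = wa (B ∩ N) + wa (B \ N) := (hwa_split B hB).symm
  have hb : wb B = wb (B ∩ N) + wb (B \ N) := (measure_inter_add_diff B hN).symm
  have haN : wa (B ∩ N) = 0 :=
    le_zero_iff.mp (le_trans (measure_mono Set.inter_subset_right) (le_of_eq hwaN))
  have hbN : wb (B ∩ N) = 0 :=
    le_zero_iff.mp (le_trans (measure_mono Set.inter_subset_right) (le_of_eq hnull))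
  have hmid : wa (B \ N) = wb (B \ N) := by
    rw [hwa, hwb, withDensity_apply fa (hB.diff hN), withDensity_apply fb (hB.diff hN)]
    exact hEq B hB
  rw [ha, hb, haN, hbN, hmid]

/-- Inverting an injective measurable map through an a.e.-measurable composition. -/
lemma aemeasurable_of_comp {κ : Measure X} {s : X → ℝ} {F : ℝ → ℝ}
    (hFmeas : Measurable fun a : Ioi (0 : ℝ) => F a)
    (hFinj : ∀ a ∈ Ioi (0 : ℝ), ∀ b ∈ Ioi (0 : ℝ), F a = F b → a = b)
    (hpos : ∀ᵐ x ∂κ, 0 < s x)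
    (hcomp : AEMeasurable (fun x => F (s x)) κ) : AEMeasurable s κ := by
  haveI : PolishSpace (Ioi (0 : ℝ)) := isOpen_Ioi.polishSpace
  have hinj : Function.Injective fun a : Ioi (0 : ℝ) => F a := fun a b hab =>
    Subtype.ext (hFinj a a.2 b b.2 hab)
  have hemb := hFmeas.measurableEmbedding hinj
  obtain ⟨G, hG, hGF⟩ := hemb.exists_measurable_extend
    (measurable_subtype_coe) (fun _ => ⟨(1 : ℝ)⟩)
  have hae : s =ᵐ[κ] fun x => G (F (s x)) := by
    refine hpos.mono fun x hx => ?_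
    have := congrFun hGF ⟨s x, hx⟩
    simpa using this.symm
  exact (hG.comp_aemeasurable hcomp).congr hae.symm

end DualRepAux2

namespace DualRepAux3

lemma grad_ineq {φ : ℝ → ℝ} (hφ_conv : StrictConvexOn ℝ (Ioi 0) φ)
    (hφ_diff : ∀ x ∈ Ioi (0:ℝ), DifferentiableAt ℝ φ x) :
    ∀ a ∈ Ioi (0:ℝ), ∀ b ∈ Ioi (0:ℝ), a ≠ b → φ a + deriv φ a * (b - a) < φ b := by
  intro a ha b hb hab
  rcases lt_or_gt_of_ne hab with h | h
  · have hs := hφ_conv.deriv_lt_slope ha hb h (hφ_diff a ha)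
    rw [slope_def_field] at hs
    have hba : 0 < b - a := sub_pos.mpr h
    have := (lt_div_iff₀ hba).mp hs
    linarith
  · have hs := hφ_conv.slope_lt_deriv hb ha h (hφ_diff a ha)
    rw [slope_def_field] at hs
    have hab' : 0 < a - b := sub_pos.mpr h
    have := (div_lt_iff₀ hab').mp hs
    linarith

lemma psi_inj {φ : ℝ → ℝ} (hφ_conv : StrictConvexOn ℝ (Ioi 0) φ)
    (hφ_diff : ∀ x ∈ Ioi (0:ℝ), DifferentiableAt ℝ φ x) :
    ∀ a ∈ Ioi (0:ℝ), ∀ b ∈ Ioi (0:ℝ),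
      a * deriv φ a - φ a = b * deriv φ b - φ b → a = b := by
  have key : ∀ a ∈ Ioi (0:ℝ), ∀ b ∈ Ioi (0:ℝ), a < b →
      a * deriv φ a - φ a < b * deriv φ b - φ b := by
    intro a ha b hb h
    have h1 : φ b + deriv φ b * (a - b) < φ a :=
      grad_ineq hφ_conv hφ_diff b hb a ha (ne_of_gt h)
    have h2 : deriv φ a < deriv φ b :=
      (hφ_conv.strictMonoOn_deriv hφ_diff) ha hb h
    have h3 : 0 < a * (deriv φ b - deriv φ a) :=
      mul_pos (mem_Ioi.mp ha) (sub_pos.mpr h2)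
    nlinarith
  intro a ha b hb hab
  rcases lt_trichotomy a b with h | h | h
  · exact absurd hab (ne_of_lt (key a ha b hb h))
  · exact h
  · exact absurd hab.symm (ne_of_lt (key b hb a ha h))

end DualRepAux3

end DualRepAuxAll

/-- `h(θ,α,x) = P_θ f(θ,α) − g(θ,α,x)` from the paper. -/
def hFun {X : Type*} [MeasurableSpace X] {d : ℕ} (φ : ℝ → ℝ)
    (p : EuclideanSpace ℝ (Fin d) → X → ℝ) (P : EuclideanSpace ℝ (Fin d) → Measure X)
    (θ α : EuclideanSpace ℝ (Fin d)) (x : X) : ℝ :=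
  (∫ y, deriv φ (p θ y / p α y) ∂(P θ))
    - ((p θ x / p α x) * deriv φ (p θ x / p α x) - φ (p θ x / p α x))

theorem dual_representation_parametric
    {X : Type*} [MeasurableSpace X] {d : ℕ}
    (lam : Measure X) [SigmaFinite lam]
    (Θ : Set (EuclideanSpace ℝ (Fin d)))
    (p : EuclideanSpace ℝ (Fin d) → X → ℝ)
    (P : EuclideanSpace ℝ (Fin d) → Measure X)
    -- the parametric model: densities w.r.t. λ, probability measures,
    -- identifiable, with common support
    (hp_nonneg : ∀ θ ∈ Θ, ∀ x, 0 ≤ p θ x)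
    (hP_dens : ∀ θ ∈ Θ, P θ = lam.withDensity (fun x => ENNReal.ofReal (p θ x)))
    (hP_prob : ∀ θ ∈ Θ, IsProbabilityMeasure (P θ))
    (hident : ∀ θ₁ ∈ Θ, ∀ θ₂ ∈ Θ, P θ₁ = P θ₂ → θ₁ = θ₂)
    (hsupp : ∀ θ₁ ∈ Θ, ∀ θ₂ ∈ Θ, {x | 0 < p θ₁ x} = {x | 0 < p θ₂ x})
    -- φ : strictly convex, nonnegative, φ(1)=0, differentiable, essentially smooth
    (φ : ℝ → ℝ)
    (hφ_conv : StrictConvexOn ℝ (Ioi 0) φ)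
    (hφ_nonneg : ∀ x ∈ Ioi (0:ℝ), 0 ≤ φ x)
    (hφ_one : φ 1 = 0)
    (hφ_diff : ∀ x ∈ Ioi (0:ℝ), DifferentiableAt ℝ φ x)
    (hφ_es : Tendsto (deriv φ) (𝓝[>] (0:ℝ)) atBot)
    -- the integrability condition ∫ |φ'(p_θ/p_α)| dP_θ < ∞ for all θ, α ∈ Θ
    (hcond : ∀ θ ∈ Θ, ∀ α ∈ Θ, Integrable (fun x => deriv φ (p θ x / p α x)) (P θ))
    -- the parameters
    (θT : EuclideanSpace ℝ (Fin d)) (hθT : θT ∈ Θ)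
    (θ : EuclideanSpace ℝ (Fin d)) (hθ : θ ∈ Θ)
    -- D_φ(θ,θ_T) is finite and the functions h(θ,α) are P_{θ_T}-integrable
    (hD_int : Integrable (fun x => φ (p θ x / p θT x)) (P θT))
    (hh_int : ∀ α ∈ Θ, Integrable (hFun φ p P θ α) (P θT)) :
    -- D_φ(θ,θ_T) = P_{θ_T} h(θ,θ_T) …
    (∫ x, φ (p θ x / p θT x) ∂(P θT)) = (∫ x, hFun φ p P θ θT x ∂(P θT)) ∧
    -- … which is the supremum of α ↦ P_{θ_T} h(θ,α) over Θ, attained at α = θ_T …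
    (∀ α ∈ Θ, (∫ x, hFun φ p P θ α x ∂(P θT)) ≤ (∫ x, hFun φ p P θ θT x ∂(P θT))) ∧
    -- … and the maximizer is unique
    (∀ α ∈ Θ, (∫ x, hFun φ p P θ α x ∂(P θT)) = (∫ x, hFun φ p P θ θT x ∂(P θT)) →
      α = θT) := by
  classical
  haveI hPTprob : IsProbabilityMeasure (P θT) := hP_prob θT hθT
  haveI hPθprob : IsProbabilityMeasure (P θ) := hP_prob θ hθ
  -- total masses
  have hmass : ∀ β ∈ Θ, ∫⁻ x, ENNReal.ofReal (p β x) ∂lam = 1 := by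
    intro β hβ
    haveI := hP_prob β hβ
    have h1 : (P β) univ = 1 := measure_univ
    rw [hP_dens β hβ, withDensity_apply _ MeasurableSet.univ, Measure.restrict_univ] at h1
    exact h1
  -- a.e. positivity
  have hnullset : ∀ β ∈ Θ, ∀ γ ∈ Θ, (P β) {x | ¬ (0 < p γ x)} = 0 := by
    intro β hβ γ hγ
    have h1 : {x | 0 < p γ x} = {x | 0 < p β x} := hsupp γ hγ β hβ
    have hset : {x | ¬ (0 < p γ x)} = {x | (fun x => ENNReal.ofReal (p β x)) x = 0} := by
      ext x
      simp only [mem_setOf_eq, ENNReal.ofReal_eq_zero, not_lt]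
      constructor
      · intro hx
        have hx2 : x ∉ {x | 0 < p γ x} := by simpa [not_lt] using hx
        rw [h1] at hx2
        exact not_lt.mp hx2
      · intro hx
        have hx2 : x ∉ {x | 0 < p β x} := by simp [not_lt, hx]
        rw [← h1] at hx2
        exact not_lt.mp hx2
    rw [hset, hP_dens β hβ]
    exact DualRepAux2.withDensity_zero_set_null lam _
      (by rw [hmass β hβ]; exact ENNReal.one_ne_top)
  have haepos : ∀ β ∈ Θ, ∀ γ ∈ Θ, ∀ᵐ x ∂(P β), 0 < p γ x := by
    intro β hβ γ hγ
    rw [ae_iff]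
    exact hnullset β hβ γ hγ
  -- analytic facts about φ
  have hgrad := DualRepAux3.grad_ineq hφ_conv hφ_diff
  have hψinj := DualRepAux3.psi_inj hφ_conv hφ_diff
  have hφcont : ContinuousOn φ (Ioi 0) := fun x hx =>
    (hφ_diff x hx).continuousAt.continuousWithinAt
  have hφmeas_restr : Measurable fun a : Ioi (0:ℝ) => φ a :=
    (ContinuousOn.restrict hφcont).measurable
  have hderiv_restr : Measurable fun a : Ioi (0:ℝ) => deriv φ (a : ℝ) :=
    (measurable_deriv φ).comp measurable_subtype_coe
  -- a.e. measurability of the density ratio t = pθ/pθT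
  have haemT : AEMeasurable (fun x => p θ x / p θT x) (P θT) := by
    refine DualRepAux2.aemeasurable_of_comp (F := fun a => a * deriv φ a - φ a)
      ((measurable_subtype_coe.mul hderiv_restr).sub hφmeas_restr) hψinj
      (((haepos θT hθT θ hθ).and (haepos θT hθT θT hθT)).mono fun x hx =>
        div_pos hx.1 hx.2) ?_
    have h1 : Integrable (fun x =>
        (∫ y, deriv φ (p θ y / p θT y) ∂(P θ)) - hFun φ p P θ θT x) (P θT) :=
      (integrable_const _).sub (hh_int θT hθT)
    have h2 : (fun x => (∫ y, deriv φ (p θ y / p θT y) ∂(P θ)) - hFun φ p P θ θT x)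
        = fun x => (p θ x / p θT x) * deriv φ (p θ x / p θT x) - φ (p θ x / p θT x) := by
      funext x
      simp only [hFun]
      ring
    rw [h2] at h1
    exact h1.aestronglyMeasurable.aemeasurable
  have haemθ : AEMeasurable (fun x => p θ x / p θT x) (P θ) := by
    refine DualRepAux2.aemeasurable_of_comp (F := deriv φ) hderiv_restr
      (fun a ha b hb hab => (hφ_conv.strictMonoOn_deriv hφ_diff).injOn ha hb hab)
      (((haepos θ hθ θ hθ).and (haepos θ hθ θT hθT)).mono fun x hx =>
        div_pos hx.1 hx.2) ?_
    exact (hcond θ hθ θT hθT).aestronglyMeasurable.aemeasurable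
  have haem : AEMeasurable (fun x => p θ x / p θT x) (P θ + P θT) :=
    aemeasurable_add_measure_iff.mpr ⟨haemθ, haemT⟩
  obtain ⟨tt, htmeas, htae⟩ : ∃ tt : X → ℝ, Measurable tt ∧
      (fun x => p θ x / p θT x) =ᵐ[P θ + P θT] tt :=
    ⟨haem.mk _, haem.measurable_mk, haem.ae_eq_mk⟩
  -- the universal pointwise density identity
  have hpoint : ∀ x, ENNReal.ofReal (p θ x / p θT x) * ENNReal.ofReal (p θT x)
      = ENNReal.ofReal (p θ x) := by
    intro x
    rcases lt_or_ge 0 (p θT x) with hpos | hle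
    · rw [← ENNReal.ofReal_mul (div_nonneg (hp_nonneg θ hθ x) (hp_nonneg θT hθT x)),
        div_mul_cancel₀ _ (ne_of_gt hpos)]
    · have hz : p θT x = 0 := le_antisymm hle (hp_nonneg θT hθT x)
      have hθz : p θ x = 0 := by
        have hx2 : x ∉ {x | 0 < p θT x} := by simp [hz]
        rw [← hsupp θ hθ θT hθT] at hx2
        exact le_antisymm (not_lt.mp hx2) (hp_nonneg θ hθ x)
      simp [hz, hθz]
  -- the change of measure: P θ = P θT withDensity (ofReal tt)
  have hMeq : P θ = (P θT).withDensity (fun x => ENNReal.ofReal (tt x)) := by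
    set N := toMeasurable (P θ + P θT) {x | ¬ (p θ x / p θT x) = tt x} with hNdef
    have hNm : MeasurableSet N := measurableSet_toMeasurable _ _
    have hNnull : (P θ + P θT) N = 0 := by
      rw [hNdef, measure_toMeasurable]
      exact ae_iff.mp htae
    have hNθ : P θ N = 0 ∧ P θT N = 0 := by
      rw [Measure.add_apply] at hNnull
      exact add_eq_zero.mp hNnull
    refine Measure.ext fun B hB => ?_
    have hE : MeasurableSet (B \ N) := hB.diff hNm
    have hsplitL : P θ B = P θ (B ∩ N) + P θ (B \ N) := (measure_inter_add_diff B hNm).symm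
    have hLN : P θ (B ∩ N) = 0 :=
      le_zero_iff.mp ((measure_mono inter_subset_right).trans (le_of_eq hNθ.1))
    have hsplitR : (P θT).withDensity (fun x => ENNReal.ofReal (tt x)) B
        = (P θT).withDensity (fun x => ENNReal.ofReal (tt x)) (B ∩ N)
          + (P θT).withDensity (fun x => ENNReal.ofReal (tt x)) (B \ N) :=
      (measure_inter_add_diff B hNm).symm
    have hRN : (P θT).withDensity (fun x => ENNReal.ofReal (tt x)) (B ∩ N) = 0 := by
      refine le_zero_iff.mp ?_
      calc (P θT).withDensity (fun x => ENNReal.ofReal (tt x)) (B ∩ N)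
          ≤ (P θT).withDensity (fun x => ENNReal.ofReal (tt x)) N :=
            measure_mono inter_subset_right
      _ = 0 := withDensity_absolutelyContinuous (P θT) _ hNθ.2
    have hmain : P θ (B \ N) = (P θT).withDensity (fun x => ENNReal.ofReal (tt x)) (B \ N) := by
      have hres : (P θT).restrict (B \ N)
          = (lam.restrict (B \ N)).withDensity (fun x => ENNReal.ofReal (p θT x)) := by
        refine Measure.ext fun s hs => ?_
        rw [Measure.restrict_apply hs, hP_dens θT hθT, withDensity_apply _ (hs.inter hE),
          withDensity_apply _ hs, Measure.restrict_restrict hs]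
      rw [withDensity_apply _ hE, hres,
        DualRepAux.lintegral_withDensity_nonmeasurable (lam.restrict (B \ N)) _
          htmeas.ennreal_ofReal (fun x => ENNReal.ofReal_ne_top),
        hP_dens θ hθ, withDensity_apply _ hE,
        DualRepAux.lintegral_restrict_indicator lam hE (fun x => ENNReal.ofReal (p θ x)),
        DualRepAux.lintegral_restrict_indicator lam hE
          (fun x => ENNReal.ofReal (tt x) * ENNReal.ofReal (p θT x))]
      refine lintegral_congr fun x => ?_
      by_cases hx : x ∈ B \ N
      · have hxN : p θ x / p θT x = tt x := by
          by_contra hc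
          exact hx.2 (subset_toMeasurable _ _ hc)
        rw [Set.indicator_of_mem hx, Set.indicator_of_mem hx, ← hxN, hpoint x]
      · simp [hx]
    rw [hsplitL, hsplitR, hLN, hRN, hmain]
  -- transfer lemma
  have htaeT : (fun x => p θ x / p θT x) =ᵐ[P θT] tt :=
    (ae_add_measure_iff.mp htae).2
  have htransfer : ∀ u : X → ℝ, Integrable u (P θ) →
      Integrable (fun x => (p θ x / p θT x) * u x) (P θT) ∧
      ∫ x, u x ∂(P θ) = ∫ x, (p θ x / p θT x) * u x ∂(P θT) := by
    intro u hu
    have hw : Measurable fun x => (tt x).toNNReal := measurable_real_toNNReal.comp htmeas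
    have hMeq' : P θ = (P θT).withDensity (fun x => (((tt x).toNNReal : ℝ≥0) : ℝ≥0∞)) := hMeq
    have hint : Integrable (fun x => (tt x).toNNReal • u x) (P θT) := by
      rw [hMeq'] at hu
      exact (integrable_withDensity_iff_integrable_smul hw).mp hu
    have haeq : (fun x => (tt x).toNNReal • u x)
        =ᵐ[P θT] fun x => (p θ x / p θT x) * u x := by
      refine htaeT.mono fun x hx => ?_
      have hx' : p θ x / p θT x = tt x := hx
      have h0 : 0 ≤ p θ x / p θT x := div_nonneg (hp_nonneg θ hθ x) (hp_nonneg θT hθT x)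
      show (tt x).toNNReal • u x = (p θ x / p θT x) * u x
      rw [NNReal.smul_def, smul_eq_mul, ← hx', Real.coe_toNNReal _ h0]
    constructor
    · exact hint.congr haeq
    · rw [hMeq', integral_withDensity_eq_integral_smul hw u]
      exact integral_congr_ae haeq
  -- key computation of ∫ hFun(θ,α) dPθT
  have hkey : ∀ α, α ∈ Θ →
      ((∫ x, hFun φ p P θ α x ∂(P θT))
        = ∫ x, ((p θ x / p θT x) * deriv φ (p θ x / p α x)
            - ((p θ x / p α x) * deriv φ (p θ x / p α x) - φ (p θ x / p α x))) ∂(P θT)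
      ∧ Integrable (fun x => (p θ x / p θT x) * deriv φ (p θ x / p α x)
            - ((p θ x / p α x) * deriv φ (p θ x / p α x) - φ (p θ x / p α x))) (P θT)) := by
    intro α hα
    have hvint : Integrable (fun x =>
        (p θ x / p α x) * deriv φ (p θ x / p α x) - φ (p θ x / p α x)) (P θT) := by
      have h1 : Integrable (fun x =>
          (∫ y, deriv φ (p θ y / p α y) ∂(P θ)) - hFun φ p P θ α x) (P θT) :=
        (integrable_const _).sub (hh_int α hα)
      refine h1.congr (Eventually.of_forall fun x => ?_)
      simp only [hFun]
      ring
    have htu := htransfer (fun x => deriv φ (p θ x / p α x)) (hcond θ hθ α hα)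
    have hWint : Integrable (fun x => (p θ x / p θT x) * deriv φ (p θ x / p α x)
        - ((p θ x / p α x) * deriv φ (p θ x / p α x) - φ (p θ x / p α x))) (P θT) :=
      htu.1.sub hvint
    refine ⟨?_, hWint⟩
    have h2 : ∫ x, hFun φ p P θ α x ∂(P θT)
        = (∫ y, deriv φ (p θ y / p α y) ∂(P θ))
          - ∫ x, ((p θ x / p α x) * deriv φ (p θ x / p α x) - φ (p θ x / p α x)) ∂(P θT) := by
      have hre : (fun x => hFun φ p P θ α x) = fun x =>
          (∫ y, deriv φ (p θ y / p α y) ∂(P θ))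
            - ((p θ x / p α x) * deriv φ (p θ x / p α x) - φ (p θ x / p α x)) := rfl
      rw [hre, integral_sub (integrable_const _) hvint, integral_const]
      simp [measure_univ]
    rw [h2, integral_sub htu.1 hvint, htu.2]
  -- Part 1
  have hpart1 : (∫ x, φ (p θ x / p θT x) ∂(P θT)) = ∫ x, hFun φ p P θ θT x ∂(P θT) := by
    rw [(hkey θT hθT).1]
    refine integral_congr_ae (Eventually.of_forall fun x => ?_)
    ring
  -- the pointwise a.e. inequality
  have haebound : ∀ α, α ∈ Θ → ∀ᵐ x ∂(P θT),
      (p θ x / p θT x) * deriv φ (p θ x / p α x)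
        - ((p θ x / p α x) * deriv φ (p θ x / p α x) - φ (p θ x / p α x))
        ≤ φ (p θ x / p θT x) := by
    intro α hα
    refine (((haepos θT hθT θ hθ).and
      ((haepos θT hθT θT hθT).and (haepos θT hθT α hα)))).mono fun x hx => ?_
    obtain ⟨h1, h2, h3⟩ := hx
    have hT : (0:ℝ) < p θ x / p θT x := div_pos h1 h2
    have hS : (0:ℝ) < p θ x / p α x := div_pos h1 h3
    have hle : φ (p θ x / p α x)
        + deriv φ (p θ x / p α x) * (p θ x / p θT x - p θ x / p α x)
        ≤ φ (p θ x / p θT x) := by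
      rcases eq_or_ne (p θ x / p α x) (p θ x / p θT x) with hST | hST
      · rw [hST]
        simp
      · exact (hgrad _ (mem_Ioi.mpr hS) _ (mem_Ioi.mpr hT) hST).le
    linarith
  -- Part 2
  have hpart2 : ∀ α ∈ Θ, (∫ x, hFun φ p P θ α x ∂(P θT))
      ≤ ∫ x, hFun φ p P θ θT x ∂(P θT) := by
    intro α hα
    rw [(hkey α hα).1, ← hpart1]
    exact integral_mono_ae (hkey α hα).2 hD_int (haebound α hα)
  refine ⟨hpart1, hpart2, ?_⟩
  -- Part 3: uniqueness
  intro α hα heq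
  rw [(hkey α hα).1, ← hpart1] at heq
  have hzero : ∫ x, (φ (p θ x / p θT x)
      - ((p θ x / p θT x) * deriv φ (p θ x / p α x)
        - ((p θ x / p α x) * deriv φ (p θ x / p α x) - φ (p θ x / p α x)))) ∂(P θT) = 0 := by
    rw [integral_sub hD_int (hkey α hα).2, heq, sub_self]
  have hnonneg : 0 ≤ᵐ[P θT] fun x => (φ (p θ x / p θT x)
      - ((p θ x / p θT x) * deriv φ (p θ x / p α x)
        - ((p θ x / p α x) * deriv φ (p θ x / p α x) - φ (p θ x / p α x)))) :=
    (haebound α hα).mono fun x hx => sub_nonneg.mpr hx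
  have haeeq := (integral_eq_zero_iff_of_nonneg_ae hnonneg
    (hD_int.sub (hkey α hα).2)).mp hzero
  have haeq2 : ∀ᵐ x ∂(P θT), p α x = p θT x := by
    refine (haeeq.and (((haepos θT hθT θ hθ).and
      ((haepos θT hθT θT hθT).and (haepos θT hθT α hα))))).mono fun x hx => ?_
    obtain ⟨hx0, h1, h2, h3⟩ := hx
    have hT : (0:ℝ) < p θ x / p θT x := div_pos h1 h2
    have hS : (0:ℝ) < p θ x / p α x := div_pos h1 h3
    have hST : p θ x / p α x = p θ x / p θT x := by
      by_contra hne
      have := hgrad _ (mem_Ioi.mpr hS) _ (mem_Ioi.mpr hT) hne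
      have hx0' : φ (p θ x / p θT x)
          - ((p θ x / p θT x) * deriv φ (p θ x / p α x)
            - ((p θ x / p α x) * deriv φ (p θ x / p α x) - φ (p θ x / p α x))) = 0 := hx0
      nlinarith [this, hx0']
    have := (div_eq_div_iff (ne_of_gt h3) (ne_of_gt h2)).mp hST
    exact (mul_left_cancel₀ (ne_of_gt h1) this).symm
  have hPeq : P α = P θT := by
    obtain ⟨N2, hN2m, hsub2, hnull⟩ : ∃ N2 : Set X, MeasurableSet N2 ∧
        {x | ¬ p α x = p θT x} ⊆ N2 ∧ (P θT) N2 = 0 :=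
      ⟨toMeasurable (P θT) {x | ¬ p α x = p θT x}, measurableSet_toMeasurable _ _,
        subset_toMeasurable _ _, by rw [measure_toMeasurable]; exact ae_iff.mp haeq2⟩
    rw [hP_dens θT hθT] at hnull
    rw [hP_dens α hα, hP_dens θT hθT]
    refine DualRepAux2.withDensity_eq_of_eq_off_null lam (p α) (p θT) hN2m hnull
      (fun x hx => ?_) ?_ ?_
    · by_contra hc
      exact hx (hsub2 hc)
    · rw [withDensity_apply _ MeasurableSet.univ, Measure.restrict_univ]
      exact hmass α hα
    · rw [withDensity_apply _ MeasurableSet.univ, Measure.restrict_univ]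
      exact hmass θT hθT
  exact hident α hα θT hθT hPeq
end
end

section
/- Assume (c.4) the estimates θ̂_φ := argmin_{θ∈Θ} sup_{α∈Θ} P_n h(θ,α) and α̂_φ(θ̂_φ) exist; (c.5) sup_{θ,α∈Θ} |P_n h(θ,α) − P_{θ_T} h(θ,α)| → 0 in probability, together with (c.5.a): for any ε>0 there is η>0 such that for every α ∈ Θ with ‖α−θ_T‖>ε and every θ∈Θ, P_{θ_T}h(θ,α) < P_{θ_T}h(θ,θ_T) − η, and (c.5.b): there is a neighborhood N(θ_T) of θ_T such that for any ε>0 there is η>0 with P_{θ_T}h(θ_T,α) < P_{θ_T}h(θ,α) − η for all α ∈ N(θ_T) and all θ∈Θ with ‖θ−θ_T‖>ε; and (c.6) there exist a neighborhood N(θ_T) of θ_T and a positive function H with P_{θ_T}H < ∞ dominating |h(θ_T,α,·)| P_{θ_T}-a.s. for all α ∈ N(θ_T). Then (1) sup_{θ∈Θ} ‖α̂_φ(θ) − θ_T‖ → 0 in probability, and (2) θ̂_φ → θ_T in probability. -/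
/- STATEMENT 14 (Proposition 3.2): assume
(c.4) the estimates θ̂_φ := argmin_{θ∈Θ} sup_{α∈Θ} P_n h(θ,α) and α̂_φ(θ) exist;
(c.5) sup_{θ,α∈Θ} |P_n h(θ,α) − P_{θ_T} h(θ,α)| → 0 in probability, together with the
well-separation conditions (c.5.a) and (c.5.b);
(c.6) on a neighborhood of θ_T, |h(θ_T,α,·)| is dominated P_{θ_T}-a.s. by a positive
P_{θ_T}-integrable function H.
Then (1) sup_{θ∈Θ} ‖α̂_φ(θ) − θ_T‖ → 0 in probability and (2) θ̂_φ → θ_T in probability. -/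

open MeasureTheory ProbabilityTheory Filter Topology Set
open scoped ENNReal NNReal

noncomputable section

theorem consistency_of_minimum_dual_divergence_estimator
    {X : Type*} [MeasurableSpace X] {d : ℕ}
    (lam : Measure X) [SigmaFinite lam]
    (Θ : Set (EuclideanSpace ℝ (Fin d)))
    (p : EuclideanSpace ℝ (Fin d) → X → ℝ)
    (P : EuclideanSpace ℝ (Fin d) → Measure X)
    -- the parametric model
    (hp_nonneg : ∀ θ ∈ Θ, ∀ x, 0 ≤ p θ x)
    (hP_dens : ∀ θ ∈ Θ, P θ = lam.withDensity (fun x => ENNReal.ofReal (p θ x)))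
    (hP_prob : ∀ θ ∈ Θ, IsProbabilityMeasure (P θ))
    (hident : ∀ θ₁ ∈ Θ, ∀ θ₂ ∈ Θ, P θ₁ = P θ₂ → θ₁ = θ₂)
    (hsupp : ∀ θ₁ ∈ Θ, ∀ θ₂ ∈ Θ, {x | 0 < p θ₁ x} = {x | 0 < p θ₂ x})
    -- φ : strictly convex, nonnegative, φ(1)=0, differentiable, essentially smooth
    (φ : ℝ → ℝ)
    (hφ_conv : StrictConvexOn ℝ (Ioi 0) φ)
    (hφ_nonneg : ∀ x ∈ Ioi (0:ℝ), 0 ≤ φ x)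
    (hφ_one : φ 1 = 0)
    (hφ_diff : ∀ x ∈ Ioi (0:ℝ), DifferentiableAt ℝ φ x)
    (hφ_es : Tendsto (deriv φ) (𝓝[>] (0:ℝ)) atBot)
    -- the integrability condition ∫ |φ'(p_θ/p_α)| dP_θ < ∞ for all θ, α ∈ Θ
    (hcond : ∀ θ ∈ Θ, ∀ α ∈ Θ, Integrable (fun x => deriv φ (p θ x / p α x)) (P θ))
    -- the true parameter and the i.i.d. sample
    (θT : EuclideanSpace ℝ (Fin d)) (hθT : θT ∈ Θ)
    {Ω : Type*} [MeasurableSpace Ω] (Pr : Measure Ω) [IsProbabilityMeasure Pr]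
    (Xs : ℕ → Ω → X) (hXmeas : ∀ i, Measurable (Xs i))
    (hiid : iIndepFun Xs Pr)
    (hlaw : ∀ i, Pr.map (Xs i) = P θT)
    -- P_{θ_T}-integrability of the functions h(θ,α)
    (hh_int : ∀ θ ∈ Θ, ∀ α ∈ Θ, Integrable (hFun φ p P θ α) (P θT))
    -- (c.4) the estimates exist: α̂_φ(θ) maximizes α ↦ P_n h(θ,α) over Θ, and θ̂_φ
    -- minimizes θ ↦ sup_{α∈Θ} P_n h(θ,α) = P_n h(θ, α̂_φ(θ)) over Θ
    (ahat : ℕ → Ω → EuclideanSpace ℝ (Fin d) → EuclideanSpace ℝ (Fin d))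
    (that : ℕ → Ω → EuclideanSpace ℝ (Fin d))
    (hahat_mem : ∀ (n : ℕ) ω, ∀ θ ∈ Θ, ahat n ω θ ∈ Θ)
    (hahat_max : ∀ (n : ℕ) ω, ∀ θ ∈ Θ, IsMaxOn
      (fun α => (n : ℝ)⁻¹ * ∑ i ∈ Finset.range n, hFun φ p P θ α (Xs i ω)) Θ (ahat n ω θ))
    (hthat_mem : ∀ (n : ℕ) ω, that n ω ∈ Θ)
    (hthat_min : ∀ (n : ℕ) ω, ∀ θ ∈ Θ,
      (n : ℝ)⁻¹ * ∑ i ∈ Finset.range n, hFun φ p P (that n ω) (ahat n ω (that n ω)) (Xs i ω)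
        ≤ (n : ℝ)⁻¹ * ∑ i ∈ Finset.range n, hFun φ p P θ (ahat n ω θ) (Xs i ω))
    -- (c.5) uniform (over Θ×Θ) convergence in probability of P_n h to P_{θ_T} h
    (hc5 : ∀ ε > (0:ℝ), Tendsto
      (fun (n : ℕ) => Pr {ω | ∃ θ ∈ Θ, ∃ α ∈ Θ, ε ≤
        |(n : ℝ)⁻¹ * ∑ i ∈ Finset.range n, hFun φ p P θ α (Xs i ω)
          - ∫ x, hFun φ p P θ α x ∂(P θT)|}) atTop (𝓝 0))
    -- (c.5.a)
    (hc5a : ∀ ε > (0:ℝ), ∃ η > (0:ℝ), ∀ α ∈ Θ, ε < ‖α - θT‖ → ∀ θ ∈ Θ,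
      (∫ x, hFun φ p P θ α x ∂(P θT)) < (∫ x, hFun φ p P θ θT x ∂(P θT)) - η)
    -- (c.5.b)
    (hc5b : ∃ N ∈ 𝓝 θT, ∀ ε > (0:ℝ), ∃ η > (0:ℝ), ∀ α ∈ N, ∀ θ ∈ Θ, ε < ‖θ - θT‖ →
      (∫ x, hFun φ p P θT α x ∂(P θT)) < (∫ x, hFun φ p P θ α x ∂(P θT)) - η)
    -- (c.6)
    (hc6 : ∃ N ∈ 𝓝 θT, ∃ H : X → ℝ, (∀ x, 0 < H x) ∧ Integrable H (P θT) ∧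
      ∀ α ∈ N, ∀ᵐ x ∂(P θT), |hFun φ p P θT α x| ≤ H x) :
    -- (1) sup_{θ∈Θ} ‖α̂_φ(θ) − θ_T‖ → 0 in probability
    (∀ ε > (0:ℝ), Tendsto
      (fun (n : ℕ) => Pr {ω | ∃ θ ∈ Θ, ε ≤ ‖ahat n ω θ - θT‖}) atTop (𝓝 0)) ∧
    -- (2) θ̂_φ → θ_T in probability
    TendstoInMeasure Pr (fun (n : ℕ) ω => that n ω) atTop (fun _ => θT) := by
  classical
  set Pn : ℕ → Ω → EuclideanSpace ℝ (Fin d) → EuclideanSpace ℝ (Fin d) → ℝ :=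
    fun n ω θ α => (n : ℝ)⁻¹ * ∑ i ∈ Finset.range n, hFun φ p P θ α (Xs i ω) with hPn
  set Ph : EuclideanSpace ℝ (Fin d) → EuclideanSpace ℝ (Fin d) → ℝ :=
    fun θ α => ∫ x, hFun φ p P θ α x ∂(P θT) with hPh
  have part1 : ∀ ε > (0:ℝ), Tendsto
      (fun (n : ℕ) => Pr {ω | ∃ θ ∈ Θ, ε ≤ ‖ahat n ω θ - θT‖}) atTop (𝓝 0) := by
    intro ε hε
    obtain ⟨η, hη, hA⟩ := hc5a (ε/2) (by linarith)
    have hsub : ∀ n : ℕ, {ω | ∃ θ ∈ Θ, ε ≤ ‖ahat n ω θ - θT‖} ⊆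
        {ω | ∃ θ ∈ Θ, ∃ α ∈ Θ, η/2 ≤ |Pn n ω θ α - Ph θ α|} := by
      intro n ω hω
      obtain ⟨θ, hθ, hεθ⟩ := hω
      by_contra hB
      simp only [mem_setOf_eq, not_exists, not_le, not_and] at hB
      have haΘ := hahat_mem n ω θ hθ
      have h1 : Pn n ω θ θT ≤ Pn n ω θ (ahat n ω θ) :=
        (isMaxOn_iff.mp (hahat_max n ω θ hθ)) θT hθT
      have h2 := hB θ hθ (ahat n ω θ) haΘ
      have h3 := hB θ hθ θT hθT
      have h4 := hA (ahat n ω θ) haΘ (by linarith) θ hθ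
      rw [abs_lt] at h2 h3
      linarith [h2.1, h2.2, h3.1, h3.2]
    have hlim := hc5 (η/2) (by linarith)
    exact tendsto_of_tendsto_of_tendsto_of_le_of_le tendsto_const_nhds hlim
      (fun n => zero_le) (fun n => measure_mono (hsub n))
  refine ⟨part1, ?_⟩
  rw [tendstoInMeasure_iff_dist]
  intro ε hε
  obtain ⟨N, hN, hc5b'⟩ := hc5b
  obtain ⟨η₂, hη₂, hB⟩ := hc5b' (ε/2) (by linarith)
  obtain ⟨δ, hδ, hball⟩ := Metric.mem_nhds_iff.mp hN
  have hsub : ∀ n : ℕ, {ω | ε ≤ dist (that n ω) θT} ⊆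
      {ω | ∃ θ ∈ Θ, ∃ α ∈ Θ, η₂/3 ≤ |Pn n ω θ α - Ph θ α|} ∪
      {ω | ∃ θ ∈ Θ, δ ≤ ‖ahat n ω θ - θT‖} := by
    intro n ω hω
    simp only [mem_setOf_eq] at hω
    by_contra hC
    simp only [mem_union, mem_setOf_eq, not_or, not_exists, not_le, not_and] at hC
    obtain ⟨hC1, hC2⟩ := hC
    have hθhat : that n ω ∈ Θ := hthat_mem n ω
    have haT : ahat n ω θT ∈ Θ := hahat_mem n ω θT hθT
    have hahat2 : ahat n ω (that n ω) ∈ Θ := hahat_mem n ω (that n ω) hθhat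
    have haTN : ahat n ω θT ∈ N := by
      apply hball
      rw [Metric.mem_ball, dist_eq_norm]
      exact hC2 θT hθT
    have hdist : ε/2 < ‖that n ω - θT‖ := by
      rw [dist_eq_norm] at hω; linarith
    have h1 : Pn n ω (that n ω) (ahat n ω (that n ω)) ≤ Pn n ω θT (ahat n ω θT) :=
      hthat_min n ω θT hθT
    have h2 : Pn n ω (that n ω) (ahat n ω θT) ≤ Pn n ω (that n ω) (ahat n ω (that n ω)) :=
      (isMaxOn_iff.mp (hahat_max n ω (that n ω) hθhat)) (ahat n ω θT) haT
    have h3 := hC1 θT hθT (ahat n ω θT) haT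
    have h4 := hC1 (that n ω) hθhat (ahat n ω θT) haT
    have h5 := hB (ahat n ω θT) haTN (that n ω) hθhat hdist
    rw [abs_lt] at h3 h4
    linarith [h3.1, h3.2, h4.1, h4.2]
  have hlim1 := hc5 (η₂/3) (by linarith)
  have hlim2 := part1 δ hδ
  have hlim : Tendsto (fun n : ℕ =>
      Pr {ω | ∃ θ ∈ Θ, ∃ α ∈ Θ, η₂/3 ≤ |Pn n ω θ α - Ph θ α|} +
      Pr {ω | ∃ θ ∈ Θ, δ ≤ ‖ahat n ω θ - θT‖}) atTop (𝓝 0) := by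
    simpa using hlim1.add hlim2
  exact tendsto_of_tendsto_of_tendsto_of_le_of_le tendsto_const_nhds hlim
    (fun n => zero_le)
    (fun n => le_trans (measure_mono (hsub n)) (measure_union_le _ _))
end
end
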